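/- Let Π ⊆ S_n form an allowable graph of permutations. Then the set of sign vectors T_Π = {X^σ : σ ∈ Π} ⊆ {+,-}^{E_n} (where X^σ_{(i,j)} = + iff σ^{-1}(i) < σ^{-1}(j)) is the set of topes of an acycloid: all vectors have full support E_n, T_Π is closed under negation, and for any distinct X, Y ∈ T_Π there exists f in the separation set S(X,Y) such that reorienting X on the parallelism class of f yields an element of T_Π. -/
import Mathlib


/-- The set `E_n = {(i,j) : 1 ≤ i < j ≤ n}`. -/
abbrev Pairs (n : ℕ) := {p : Fin n × Fin n // p.1 < p.2}

/-- The inversion set of a permutation (viewed as the word `σ(1), …, σ(n)`):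
pairs `i < j` such that `i` appears after `j`. -/
def invSet {n : ℕ} (σ : Equiv.Perm (Fin n)) : Set (Pairs n) :=
  {e | σ.symm e.1.2 < σ.symm e.1.1}

/-- A permutation of positions that reverses a collection of pairwise disjoint
intervals (substrings) and fixes everything else. -/
def IsBlockReversal {n : ℕ} (ρ : Equiv.Perm (Fin n)) : Prop :=
  ∃ (k : ℕ) (a b : Fin k → Fin n),
    (∀ t, a t ≤ b t) ∧
    (∀ s t, s ≠ t → (b s : ℕ) < (a t : ℕ) ∨ (b t : ℕ) < (a s : ℕ)) ∧
    (∀ p : Fin n,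
      (∃ t, a t ≤ p ∧ p ≤ b t ∧ ((ρ p : ℕ) = (a t : ℕ) + (b t : ℕ) - (p : ℕ))) ∨
      ((∀ t, ¬(a t ≤ p ∧ p ≤ b t)) ∧ ρ p = p))

/-- A move from `σ` to `γ`: `γ` is obtained from the word of `σ` by reversing one or
more disjoint substrings. -/
def IsMove {n : ℕ} (σ γ : Equiv.Perm (Fin n)) : Prop :=
  σ ≠ γ ∧ ∃ ρ : Equiv.Perm (Fin n), IsBlockReversal ρ ∧ ∀ p, γ p = σ (ρ p)

/-- The set of inversions of a move from `σ` to `γ`: `inv(σ) Δ inv(γ)`. -/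
def moveInv {n : ℕ} (σ γ : Equiv.Perm (Fin n)) : Set (Pairs n) :=
  symmDiff (invSet σ) (invSet γ)

/-- An allowable sequence in `P` from `σ` to `σ'` with moves in `T` (here a move in
`T` is recorded by its inversion set): a sequence of permutations of `P` in which
consecutive permutations differ by a move whose inversion set is in `T`, and each
pair is reversed at most once (the inversion sets of the steps are pairwise disjoint). -/
def AllowSeq {n : ℕ} (P : Set (Equiv.Perm (Fin n))) (T : Set (Set (Pairs n)))
    (σ σ' : Equiv.Perm (Fin n)) : Prop :=
  ∃ (l : ℕ) (γ : Fin (l + 1) → Equiv.Perm (Fin n)),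
    γ 0 = σ ∧ γ (Fin.last l) = σ' ∧ (∀ k, γ k ∈ P) ∧
    (∀ k : Fin l, IsMove (γ k.castSucc) (γ k.succ) ∧
      moveInv (γ k.castSucc) (γ k.succ) ∈ T) ∧
    (∀ k k' : Fin l, k ≠ k' →
      Disjoint (moveInv (γ k.castSucc) (γ k.succ)) (moveInv (γ k'.castSucc) (γ k'.succ)))

/-- The order-reversing permutation of positions. -/
def revFin (n : ℕ) : Equiv.Perm (Fin n) :=
  Function.Involutive.toPerm Fin.rev fun x => Fin.rev_rev x

/-- The reverse of a permutation: its word read backwards. -/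
def reversePerm {n : ℕ} (σ : Equiv.Perm (Fin n)) : Equiv.Perm (Fin n) :=
  σ * revFin n

/-- `P ⊆ S_n` together with a set of moves `T` forms an allowable graph of
permutations: (P1) `P` is symmetric (closed under reversal), (P2) any two
permutations of `P` are joined by an allowable sequence with moves in `T`,
(P3) the inversion sets of moves in `T` are pairwise equal or disjoint. -/
def IsAllowableGraph {n : ℕ} (P : Set (Equiv.Perm (Fin n)))
    (T : Set (Set (Pairs n))) : Prop :=
  (∀ σ ∈ P, reversePerm σ ∈ P) ∧
  (∀ σ ∈ P, ∀ σ' ∈ P, AllowSeq P T σ σ') ∧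
  (∀ D ∈ T, ∀ D' ∈ T, D = D' ∨ Disjoint D D')

/-- The sign vector `X^σ ∈ {+,-}^{E_n}` of a permutation:
`X^σ_{(i,j)} = +` iff `i` appears before `j` in the word of `σ`. -/
def permSign {n : ℕ} (σ : Equiv.Perm (Fin n)) : Pairs n → SignType := fun e =>
  if σ.symm e.1.1 < σ.symm e.1.2 then 1 else -1

/-- Two ground-set elements are parallel for the sign vectors of the permutations in
`P` : all sign vectors agree on them, or all disagree. -/
def ParallelIn {n : ℕ} (P : Set (Equiv.Perm (Fin n))) (e f : Pairs n) : Prop :=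
  (∀ σ ∈ P, permSign σ e = permSign σ f) ∨ (∀ σ ∈ P, permSign σ e = -permSign σ f)

open Classical in
/-- Reorientation of a sign vector on a subset of the ground set. -/
noncomputable def reorient {E : Type*} (X : E → SignType) (F : Set E) : E → SignType :=
  fun e => if e ∈ F then -X e else X e

/-- The set of topes associated to an allowable graph of permutations. -/
def topeSet {n : ℕ} (P : Set (Equiv.Perm (Fin n))) : Set (Pairs n → SignType) :=
  {X | ∃ σ ∈ P, X = permSign σ}

section Helpers
variable {n : ℕ}

lemma permSign_ne_zero (σ : Equiv.Perm (Fin n)) (e : Pairs n) : permSign σ e ≠ 0 := by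
  unfold permSign; split <;> decide

lemma symm_ne (σ : Equiv.Perm (Fin n)) (e : Pairs n) : σ.symm e.1.1 ≠ σ.symm e.1.2 :=
  fun h => absurd (σ.symm.injective h) e.2.ne

lemma permSign_eq_neg_one_iff (σ : Equiv.Perm (Fin n)) (e : Pairs n) :
    permSign σ e = -1 ↔ e ∈ invSet σ := by
  have h := symm_ne σ e
  rcases h.lt_or_gt with h1 | h1 <;>
    simp [permSign, invSet, Set.mem_setOf_eq, h1, h1.not_gt, h1.asymm]

lemma permSign_eq_one_iff (σ : Equiv.Perm (Fin n)) (e : Pairs n) :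
    permSign σ e = 1 ↔ e ∉ invSet σ := by
  have h := symm_ne σ e
  rcases h.lt_or_gt with h1 | h1 <;>
    simp [permSign, invSet, Set.mem_setOf_eq, h1, h1.not_gt, h1.asymm]

lemma mem_moveInv_iff (σ τ : Equiv.Perm (Fin n)) (e : Pairs n) :
    e ∈ moveInv σ τ ↔ permSign τ e = -permSign σ e := by
  rw [moveInv, Set.mem_symmDiff]
  by_cases h1 : e ∈ invSet σ <;> by_cases h2 : e ∈ invSet τ
  · rw [(permSign_eq_neg_one_iff σ e).2 h1, (permSign_eq_neg_one_iff τ e).2 h2]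
    simp [h1, h2]
  · rw [(permSign_eq_neg_one_iff σ e).2 h1, (permSign_eq_one_iff τ e).2 h2]
    simp [h1, h2]
  · rw [(permSign_eq_one_iff σ e).2 h1, (permSign_eq_neg_one_iff τ e).2 h2]
    simp [h1, h2]
  · rw [(permSign_eq_one_iff σ e).2 h1, (permSign_eq_one_iff τ e).2 h2]
    simp [h1, h2]

lemma notMem_moveInv_iff (σ τ : Equiv.Perm (Fin n)) (e : Pairs n) :
    e ∉ moveInv σ τ ↔ permSign τ e = permSign σ e := by
  rw [mem_moveInv_iff]
  have hσ := permSign_ne_zero σ e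
  have hτ := permSign_ne_zero τ e
  generalize permSign τ e = s at *
  generalize permSign σ e = t at *
  cases s <;> cases t <;> simp_all

lemma sign_eq_neg_of_ne {s t : SignType} (hs : s ≠ 0) (ht : t ≠ 0) (hne : s ≠ t) :
    s = -t := by cases s <;> cases t <;> simp_all

end Helpers
section Helpers2
variable {n : ℕ}

lemma moveInv_nonempty {σ γ : Equiv.Perm (Fin n)} (h : IsMove σ γ) :
    (moveInv σ γ).Nonempty := by
  obtain ⟨hne, ρ, ⟨k, a, b, hab, hdisj, hblk⟩, hγ⟩ := h
  have hρ : ∃ p, ρ p ≠ p := by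
    by_contra hc
    push_neg at hc
    exact hne (Equiv.ext fun p => by rw [hγ, hc]).symm
  obtain ⟨p, hp⟩ := hρ
  obtain ⟨t, h1, h2, h3⟩ := (hblk p).resolve_right (fun ⟨_, hfix⟩ => hp hfix)
  have h1' : (a t : ℕ) ≤ (p : ℕ) := h1
  have h2' : (p : ℕ) ≤ (b t : ℕ) := h2
  have hlt : (a t : ℕ) < (b t : ℕ) := by
    rcases lt_or_eq_of_le (hab t) with h' | h'
    · exact h'
    · exact absurd (Fin.ext (by omega : (ρ p : ℕ) = (p : ℕ))) hp
  -- ρ sends a t to b t and b t to a t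
  have key : ∀ q : Fin n, (a t : ℕ) ≤ q → (q : ℕ) ≤ b t →
      (ρ q : ℕ) = (a t : ℕ) + (b t : ℕ) - (q : ℕ) := by
    intro q hq1 hq2
    obtain ⟨t', k1, k2, k3⟩ := (hblk q).resolve_right
      (fun ⟨hall, _⟩ => hall t ⟨hq1, hq2⟩)
    have k1' : (a t' : ℕ) ≤ (q : ℕ) := k1
    have k2' : (q : ℕ) ≤ (b t' : ℕ) := k2
    have : t' = t := by
      by_contra hne'
      rcases hdisj t' t hne' with h' | h' <;> omega
    rw [this] at k3; exact k3
  have hρa : ρ (a t) = b t := Fin.ext (by rw [key (a t) le_rfl (le_of_lt hlt)]; omega)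
  have hρb : ρ (b t) = a t := Fin.ext (by rw [key (b t) (le_of_lt hlt) le_rfl]; omega)
  set u := σ (a t) with hu
  set v := σ (b t) with hv
  have huv : u ≠ v := fun h' =>
    absurd (congrArg (Fin.val) (σ.injective h')) (by omega)
  have hsu : σ.symm u = a t := σ.symm_apply_apply _
  have hsv : σ.symm v = b t := σ.symm_apply_apply _
  have hgu : γ.symm u = b t := by
    rw [Equiv.symm_apply_eq, hγ, hρb]
  have hgv : γ.symm v = a t := by
    rw [Equiv.symm_apply_eq, hγ, hρa]
  have hltF : a t < b t := hlt
  rcases huv.lt_or_gt with hord | hord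
  · refine ⟨⟨(u, v), hord⟩, ?_⟩
    rw [moveInv, Set.mem_symmDiff]
    right
    constructor
    · show γ.symm v < γ.symm u
      rw [hgu, hgv]; exact hltF
    · show ¬ σ.symm v < σ.symm u
      rw [hsu, hsv]; exact (le_of_lt hltF).not_gt
  · refine ⟨⟨(v, u), hord⟩, ?_⟩
    rw [moveInv, Set.mem_symmDiff]
    left
    constructor
    · show σ.symm u < σ.symm v
      rw [hsu, hsv]; exact hltF
    · show ¬ γ.symm u < γ.symm v
      rw [hgu, hgv]; exact (le_of_lt hltF).not_gt

end Helpers2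
section Helpers3
variable {n : ℕ}

/-- Along an allowable sequence, the agreement of signs on two elements of a
common move set `D ∈ T` is invariant. -/
lemma parallel_invariant {P : Set (Equiv.Perm (Fin n))} {T : Set (Set (Pairs n))}
    (h : IsAllowableGraph P T) {D : Set (Pairs n)} (hD : D ∈ T)
    {f g : Pairs n} (hf : f ∈ D) (hg : g ∈ D)
    {l : ℕ} {γ : Fin (l + 1) → Equiv.Perm (Fin n)}
    (hstep : ∀ k : Fin l, IsMove (γ k.castSucc) (γ k.succ) ∧
      moveInv (γ k.castSucc) (γ k.succ) ∈ T) :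
    ∀ m : Fin (l + 1),
      (permSign (γ m) f = permSign (γ m) g ↔ permSign (γ 0) f = permSign (γ 0) g) := by
  intro m
  induction m using Fin.induction with
  | zero => rfl
  | succ i ih =>
    rcases h.2.2 D hD _ (hstep i).2 with heq | hdis
    · have hf' : f ∈ moveInv (γ i.castSucc) (γ i.succ) := heq ▸ hf
      have hg' : g ∈ moveInv (γ i.castSucc) (γ i.succ) := heq ▸ hg
      rw [(mem_moveInv_iff _ _ f).1 hf', (mem_moveInv_iff _ _ g).1 hg', neg_inj]
      exact ih
    · have hf' : f ∉ moveInv (γ i.castSucc) (γ i.succ) := Set.disjoint_left.1 hdis hf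
      have hg' : g ∉ moveInv (γ i.castSucc) (γ i.succ) := Set.disjoint_left.1 hdis hg
      rw [(notMem_moveInv_iff _ _ f).1 hf', (notMem_moveInv_iff _ _ g).1 hg']
      exact ih

/-- Two elements of a common move set `D ∈ T` are parallel in `P`. -/
lemma parallelIn_of_mem_T {P : Set (Equiv.Perm (Fin n))} {T : Set (Set (Pairs n))}
    (h : IsAllowableGraph P T) {D : Set (Pairs n)} (hD : D ∈ T)
    {f g : Pairs n} (hf : f ∈ D) (hg : g ∈ D)
    {σ : Equiv.Perm (Fin n)} (hσ : σ ∈ P) : ParallelIn P f g := by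
  have main : ∀ π ∈ P, (permSign π f = permSign π g ↔ permSign σ f = permSign σ g) := by
    intro π hπ
    obtain ⟨l, γ, hγ0, hγl, _, hstep, _⟩ := h.2.1 σ hσ π hπ
    have := parallel_invariant h hD hf hg hstep (Fin.last l)
    rw [hγ0, hγl] at this
    exact this
  by_cases hb : permSign σ f = permSign σ g
  · exact Or.inl fun π hπ => (main π hπ).2 hb
  · refine Or.inr fun π hπ => ?_
    exact sign_eq_neg_of_ne (permSign_ne_zero _ _) (permSign_ne_zero _ _)
      (fun hc => hb ((main π hπ).1 hc))

/-- Along an allowable sequence with pairwise disjoint move sets, an element of the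
first move set has flipped sign at every later stage. -/
lemma flip_persists {l : ℕ} (hl : 0 < l) (γ : Fin (l + 1) → Equiv.Perm (Fin n))
    (hdisj : ∀ k k' : Fin l, k ≠ k' →
      Disjoint (moveInv (γ k.castSucc) (γ k.succ)) (moveInv (γ k'.castSucc) (γ k'.succ)))
    {f : Pairs n}
    (hf : f ∈ moveInv (γ (⟨0, hl⟩ : Fin l).castSucc) (γ (⟨0, hl⟩ : Fin l).succ)) :
    ∀ m : Fin (l + 1), m ≠ 0 → permSign (γ m) f = -permSign (γ 0) f := by
  intro m
  induction m using Fin.induction with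
  | zero => exact fun hc => absurd rfl hc
  | succ i ih =>
    intro _
    by_cases hi : (i : ℕ) = 0
    · have hi0 : i = ⟨0, hl⟩ := Fin.ext hi
      have hc0 : i.castSucc = 0 := Fin.ext hi
      rw [hi0] at *
      rw [(mem_moveInv_iff _ _ f).1 hf, hc0]
    · have hne : i ≠ ⟨0, hl⟩ := fun hc => hi (congrArg Fin.val hc)
      have hfni : f ∉ moveInv (γ i.castSucc) (γ i.succ) :=
        Set.disjoint_right.1 (hdisj _ _ hne) hf
      rw [(notMem_moveInv_iff _ _ f).1 hfni]
      exact ih (by simp [Fin.ext_iff, hi])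

end Helpers3
section Helpers4
variable {n : ℕ}

lemma permSign_reversePerm (σ : Equiv.Perm (Fin n)) :
    permSign (reversePerm σ) = -permSign σ := by
  funext e
  have hsymm : ∀ x, (reversePerm σ).symm x = Fin.rev (σ.symm x) := by
    intro x; rfl
  have h := symm_ne σ e
  simp only [Pi.neg_apply, permSign, hsymm]
  rcases h.lt_or_gt with h1 | h1
  · rw [if_pos h1, if_neg (by simpa [Fin.rev_lt_rev] using h1.asymm)]
  · rw [if_neg h1.asymm, if_pos (by simpa [Fin.rev_lt_rev] using h1)]
    rfl

end Helpers4
/-- For an allowable graph of permutations `P`, the set `T_P = {X^σ : σ ∈ P}` is the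
set of topes of an acycloid: (T1) all sign vectors have full support `E_n`, (T2) the
set is closed under negation, and (T3) for distinct `X, Y ∈ T_P` there is `f` in the
separation set `S(X,Y)` such that reorienting `X` on the parallelism class of `f`
again gives an element of `T_P`. -/
theorem allowableGraph_gives_acycloid {n : ℕ} (P : Set (Equiv.Perm (Fin n)))
    (T : Set (Set (Pairs n))) (h : IsAllowableGraph P T) :
    (∀ X ∈ topeSet P, ∀ e, X e ≠ 0) ∧
    (∀ X ∈ topeSet P, -X ∈ topeSet P) ∧
    (∀ X ∈ topeSet P, ∀ Y ∈ topeSet P, X ≠ Y →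
      ∃ f, X f ≠ 0 ∧ X f = -Y f ∧
        reorient X {g | ParallelIn P f g} ∈ topeSet P) := by
  refine ⟨?_, ?_, ?_⟩
  · rintro X ⟨σ, hσ, rfl⟩ e
    exact permSign_ne_zero σ e
  · rintro X ⟨σ, hσ, rfl⟩
    exact ⟨reversePerm σ, h.1 σ hσ, (permSign_reversePerm σ).symm⟩
  · rintro X ⟨σ, hσ, rfl⟩ Y ⟨τ, hτ, rfl⟩ hXY
    obtain ⟨l, γ, hγ0, hγl, hγP, hstep, hdisj⟩ := h.2.1 σ hσ τ hτ
    have hl : 0 < l := by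
      rcases Nat.eq_zero_or_pos l with rfl | hl
      · refine absurd ?_ hXY
        rw [← hγ0, ← hγl]
        congr 1
      · exact hl
    set k₀ : Fin l := ⟨0, hl⟩ with hk₀
    set D : Set (Pairs n) := moveInv (γ k₀.castSucc) (γ k₀.succ) with hDdef
    have hDT : D ∈ T := (hstep k₀).2
    obtain ⟨f, hfD⟩ := moveInv_nonempty (hstep k₀).1
    have hcast0 : k₀.castSucc = 0 := rfl
    -- sign of f flips from σ to τ
    have hflip : permSign τ f = -permSign σ f := by
      have := flip_persists hl γ hdisj hfD (Fin.last l)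
        (by simp [Fin.ext_iff, Fin.last, hl.ne'])
      rwa [hγ0, hγl] at this
    refine ⟨f, permSign_ne_zero σ f, ?_, ?_⟩
    · rw [hflip, neg_neg]
    · -- the parallelism class of f equals D
      have hclass : {g | ParallelIn P f g} = D := by
        ext g
        constructor
        · rintro (hpar | hpar)
          · have h1 := hpar (γ k₀.castSucc) (hγP _)
            have h2 := hpar (γ k₀.succ) (hγP _)
            have hf' := (mem_moveInv_iff _ _ f).1 hfD
            exact (mem_moveInv_iff _ _ g).2 (by rw [← h1, ← h2, hf'])
          · have h1 := hpar (γ k₀.castSucc) (hγP _)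
            have h2 := hpar (γ k₀.succ) (hγP _)
            have hf' := (mem_moveInv_iff _ _ f).1 hfD
            refine (mem_moveInv_iff _ _ g).2 ?_
            have hg1 : permSign (γ k₀.castSucc) g = -permSign (γ k₀.castSucc) f := by
              rw [h1, neg_neg]
            have hg2 : permSign (γ k₀.succ) g = -permSign (γ k₀.succ) f := by
              rw [h2, neg_neg]
            rw [hg1, hg2, hf', neg_neg]
        · intro hgD
          exact parallelIn_of_mem_T h hDT hfD hgD (hγP k₀.castSucc)
      refine ⟨γ k₀.succ, hγP _, ?_⟩
      funext g
      rw [hclass]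
      by_cases hg : g ∈ D
      · rw [reorient, if_pos hg, ← hγ0, ← hcast0, ((mem_moveInv_iff _ _ g).1 hg)]
      · rw [reorient, if_neg hg, ← hγ0, ← hcast0, ((notMem_moveInv_iff _ _ g).1 hg)]
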